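/- Let H be a real Hilbert space, B : H → H an ℓ-Lipschitz continuous map (ℓ ≥ 0), D : H → H a Fréchet differentiable map whose derivative D' is m-Lipschitz in operator norm (m ≥ 0), and let β > 0, δ̂ > 0, 0 < θ̄ < 2, and 0 < ρ_min ≤ ρ ≤ ρ_max. Let g, w, x ∈ H and y := (g − x)/ρ + w + [B(x) − B(g)] + [D(x) − D_{(g)}(x)]. Assume 4ℓ²ρ² + (β^{-1} + δ̂)ρ + (mρ‖x − g‖)² ≤ θ̄. Define Δ := ⟪g − x, y − w⟫ − (1/(4β))‖x − g‖². Then Δ ≥ ((2 − θ̄)/(4ρ_max))‖x − g‖² + (ρ_min/2)‖y − w‖². -/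

import Mathlib

open scoped RealInnerProductSpace

open Set in
lemma taylor_quadratic_bound {H : Type*} [NormedAddCommGroup H] [NormedSpace ℝ H]
    (D : H → H) (D' : H → H →L[ℝ] H) (hD : ∀ x, HasFDerivAt D (D' x) x)
    (mD : ℝ) (hDlip : ∀ x y, ‖D' x - D' y‖ ≤ mD * ‖x - y‖) (g x : H) :
    ‖D x - (D g + D' g (x - g))‖ ≤ mD / 2 * ‖x - g‖ ^ 2 := by
  set v := x - g with hv
  set f : ℝ → H := fun t => D (g + t • v) - D g - t • (D' g v) with hf
  have hderiv : ∀ t : ℝ, HasDerivAt f (D' (g + t • v) v - D' g v) t := by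
    intro t
    have h1 : HasDerivAt (fun t : ℝ => g + t • v) v t := by
      simpa using ((hasDerivAt_id t).smul_const v).const_add g
    have h2 := (hD (g + t • v)).comp_hasDerivAt t h1
    have h3 : HasDerivAt (fun t : ℝ => t • D' g v) (D' g v) t := by
      simpa using (hasDerivAt_id t).smul_const (D' g v)
    exact (h2.sub_const (D g)).sub h3
  have key := image_norm_le_of_norm_deriv_right_le_deriv_boundary
    (f := f) (a := 0) (b := 1) (f' := fun t => D' (g + t • v) v - D' g v)
    (fun t _ => (hderiv t).continuousAt.continuousWithinAt)
    (fun t _ => (hderiv t).hasDerivWithinAt)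
    (B := fun t => mD * ‖v‖ ^ 2 / 2 * t ^ 2) (B' := fun t => mD * ‖v‖ ^ 2 * t)
    (by simp [hf])
    (by
      intro t
      have := (hasDerivAt_pow 2 t).const_mul (mD * ‖v‖ ^ 2 / 2)
      refine this.congr_deriv ?_
      ring)
    (by
      intro t ht
      show ‖D' (g + t • v) v - D' g v‖ ≤ mD * ‖v‖ ^ 2 * t
      have h4 : D' (g + t • v) v - D' g v = (D' (g + t • v) - D' g) v := by
        simp [ContinuousLinearMap.sub_apply]
      rw [h4]
      calc ‖(D' (g + t • v) - D' g) v‖ ≤ ‖D' (g + t • v) - D' g‖ * ‖v‖ :=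
            (D' (g + t • v) - D' g).le_opNorm v
        _ ≤ (mD * ‖(g + t • v) - g‖) * ‖v‖ := by
            gcongr; exact hDlip _ _
        _ = mD * ‖v‖ ^ 2 * t := by
            have : (g + t • v) - g = t • v := by abel
            rw [this, norm_smul, Real.norm_eq_abs, abs_of_nonneg ht.1]
            ring)
  have h1 := key (x := 1) (by norm_num)
  have hfe : f 1 = D x - (D g + D' g (x - g)) := by
    simp only [hf, one_smul]
    rw [show g + v = x by rw [hv]; abel]
    rw [← hv]; abel
  rw [hfe] at h1
  calc ‖D x - (D g + D' g (x - g))‖ ≤ mD * ‖v‖ ^ 2 / 2 * 1 ^ 2 := h1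
    _ = mD / 2 * ‖x - g‖ ^ 2 := by rw [hv]; ring

set_option maxHeartbeats 1000000 in
/-- Lower bound on the per-operator contribution
`Δ = ⟪g − x, y − w⟫ − (1/(4β))‖x − g‖²` for a proximal-Newton step `(x, y)` whose stepsize `ρ`
satisfies the line-search upper bound `4ℓ²ρ² + (β⁻¹ + δ̂)ρ + (mρ‖x − g‖)² ≤ θ̄` with
`0 < θ̄ < 2` and `0 < ρ_min ≤ ρ ≤ ρ_max`. -/
theorem delta_lower_bound_proximal_newton {H : Type*} [NormedAddCommGroup H]
    [InnerProductSpace ℝ H]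
    (B : H → H) (ℓ : ℝ) (hℓ : 0 ≤ ℓ) (hB : ∀ x y, ‖B x - B y‖ ≤ ℓ * ‖x - y‖)
    (D : H → H) (D' : H → H →L[ℝ] H) (hD : ∀ x, HasFDerivAt D (D' x) x)
    (mD : ℝ) (hmD : 0 ≤ mD) (hDlip : ∀ x y, ‖D' x - D' y‖ ≤ mD * ‖x - y‖)
    (β δhat θbar : ℝ) (hβ : 0 < β) (hδ : 0 < δhat) (hθ0 : 0 < θbar) (hθ2 : θbar < 2)
    (ρmin ρmax ρ : ℝ) (h1 : 0 < ρmin) (h2 : ρmin ≤ ρ) (h3 : ρ ≤ ρmax)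
    (g w x : H) (y : H)
    (hy : y = ρ⁻¹ • (g - x) + w + (B x - B g) + (D x - (D g + D' g (x - g))))
    (hstep : 4 * ℓ ^ 2 * ρ ^ 2 + (β⁻¹ + δhat) * ρ + (mD * ρ * ‖x - g‖) ^ 2 ≤ θbar) :
    (2 - θbar) / (4 * ρmax) * ‖x - g‖ ^ 2 + ρmin / 2 * ‖y - w‖ ^ 2 ≤
      ⟪g - x, y - w⟫ - 1 / (4 * β) * ‖x - g‖ ^ 2 := by
  have hρ : 0 < ρ := lt_of_lt_of_le h1 h2
  have hρmax : 0 < ρmax := lt_of_lt_of_le hρ h3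
  set u : H := g - x with hu
  set e : H := (B x - B g) + (D x - (D g + D' g (x - g))) with he
  have hv : y - w = ρ⁻¹ • u + e := by rw [hy, he, hu]; abel
  set nu : ℝ := ‖x - g‖ with hnu
  have hnuu : ‖u‖ = nu := by rw [hu, hnu, norm_sub_rev]
  -- norm of e
  have hebound : ‖e‖ ≤ ℓ * nu + mD / 2 * nu ^ 2 := by
    calc ‖e‖ ≤ ‖B x - B g‖ + ‖D x - (D g + D' g (x - g))‖ := norm_add_le _ _
      _ ≤ ℓ * nu + mD / 2 * nu ^ 2 := by
          gcongr
          · exact hB x g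
          · exact taylor_quadratic_bound D D' hD mD hDlip g x
  -- key identity
  have hinner : ⟪u, y - w⟫ = ρ⁻¹ * nu ^ 2 + ⟪u, e⟫ := by
    rw [hv, inner_add_right, real_inner_smul_right, real_inner_self_eq_norm_sq, hnuu]
  have hnormv : ‖y - w‖ ^ 2 = ρ⁻¹ ^ 2 * nu ^ 2 + 2 * (ρ⁻¹ * ⟪u, e⟫) + ‖e‖ ^ 2 := by
    rw [hv, norm_add_sq_real, real_inner_smul_left, norm_smul, Real.norm_eq_abs,
      abs_of_pos (inv_pos.mpr hρ), mul_pow, hnuu]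
  -- squared bound on e
  have he2 : ‖e‖ ^ 2 ≤ 2 * ℓ ^ 2 * nu ^ 2 + mD ^ 2 / 2 * nu ^ 4 := by
    have h0 : 0 ≤ ‖e‖ := norm_nonneg _
    nlinarith [sq_nonneg (ℓ * nu - mD / 2 * nu ^ 2), sq_nonneg nu, norm_nonneg e,
      mul_nonneg (mul_nonneg hℓ (norm_nonneg (x - g))) hmD]
  -- rewrite hstep
  have hstep' : 4 * ℓ ^ 2 * ρ ^ 2 + (β⁻¹ + δhat) * ρ + mD ^ 2 * ρ ^ 2 * nu ^ 2 ≤ θbar := by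
    calc 4 * ℓ ^ 2 * ρ ^ 2 + (β⁻¹ + δhat) * ρ + mD ^ 2 * ρ ^ 2 * nu ^ 2
        = 4 * ℓ ^ 2 * ρ ^ 2 + (β⁻¹ + δhat) * ρ + (mD * ρ * ‖x - g‖) ^ 2 := by
          rw [hnu]; ring
      _ ≤ θbar := hstep
  -- coefficient inequality: 1/(2ρ) - 1/(4β) - ρℓ² - ρ mD² nu²/4 ≥ (2-θ̄)/(4 ρmax)
  have hcoef : (2 - θbar) / (4 * ρmax) ≤
      1 / (2 * ρ) - 1 / (4 * β) - ρ * ℓ ^ 2 - ρ * mD ^ 2 * nu ^ 2 / 4 := by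
    have hA : (2 - θbar) / (4 * ρmax) ≤ (2 - θbar) / (4 * ρ) := by
      apply div_le_div_of_nonneg_left (by linarith) (by linarith) (by linarith)
    have hB' : (2 - θbar) / (4 * ρ) ≤
        1 / (2 * ρ) - 1 / (4 * β) - ρ * ℓ ^ 2 - ρ * mD ^ 2 * nu ^ 2 / 4 := by
      rw [div_le_iff₀ (by positivity : (0:ℝ) < 4 * ρ)]
      have hexp : (1 / (2 * ρ) - 1 / (4 * β) - ρ * ℓ ^ 2 - ρ * mD ^ 2 * nu ^ 2 / 4) * (4 * ρ)
          = 2 - β⁻¹ * ρ - 4 * ℓ ^ 2 * ρ ^ 2 - mD ^ 2 * ρ ^ 2 * nu ^ 2 := by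
        field_simp
        ring
      rw [hexp]
      have hδρ : 0 < δhat * ρ := mul_pos hδ hρ
      nlinarith [hstep']
    linarith
  -- combine
  have hvsq : ρmin / 2 * ‖y - w‖ ^ 2 ≤ ρ / 2 * ‖y - w‖ ^ 2 := by
    have := sq_nonneg ‖y - w‖
    nlinarith
  have hmain : (2 - θbar) / (4 * ρmax) * nu ^ 2 + ρ / 2 * ‖y - w‖ ^ 2 ≤
      ⟪u, y - w⟫ - 1 / (4 * β) * nu ^ 2 := by
    have hkey : ⟪u, y - w⟫ - ρ / 2 * ‖y - w‖ ^ 2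
        = 1 / (2 * ρ) * nu ^ 2 - ρ / 2 * ‖e‖ ^ 2 := by
      rw [hinner, hnormv]
      field_simp
      ring
    have hnu2 : 0 ≤ nu ^ 2 := sq_nonneg nu
    have hc := mul_le_mul_of_nonneg_right hcoef hnu2
    have hexp2 : (1 / (2 * ρ) - 1 / (4 * β) - ρ * ℓ ^ 2 - ρ * mD ^ 2 * nu ^ 2 / 4) * nu ^ 2
        = 1 / (2 * ρ) * nu ^ 2 - 1 / (4 * β) * nu ^ 2 - ρ * ℓ ^ 2 * nu ^ 2
          - ρ * mD ^ 2 * nu ^ 4 / 4 := by ring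
    rw [hexp2] at hc
    have hesq : ρ / 2 * ‖e‖ ^ 2 ≤ ρ * ℓ ^ 2 * nu ^ 2 + ρ * mD ^ 2 * nu ^ 4 / 4 := by
      have := mul_le_mul_of_nonneg_left he2 (by positivity : (0:ℝ) ≤ ρ / 2)
      linarith [this]
    linarith
  calc (2 - θbar) / (4 * ρmax) * ‖x - g‖ ^ 2 + ρmin / 2 * ‖y - w‖ ^ 2
      ≤ (2 - θbar) / (4 * ρmax) * nu ^ 2 + ρ / 2 * ‖y - w‖ ^ 2 := by
        rw [hnu]; linarith
    _ ≤ ⟪u, y - w⟫ - 1 / (4 * β) * nu ^ 2 := hmain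
    _ = ⟪g - x, y - w⟫ - 1 / (4 * β) * ‖x - g‖ ^ 2 := by rw [hu, hnu]
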